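/- Let ℓ ≥ 7 be an integer and let G be a graph such that every subgraph J of G with at least one vertex satisfies (ℓ−2)·e(J) < (ℓ−1)·v(J) (i.e. m(G) < m₂(C_ℓ) = (ℓ−1)/(ℓ−2)). Then there exists a proper edge colouring of G in which no copy of C_ℓ is rainbow (i.e. G ⟶̸rb C_ℓ). -/

import Mathlib

/-- A proper edge colouring of `G`: edges sharing a vertex receive distinct colours. -/
def IsProperEdgeColoring {V : Type*} (G : SimpleGraph V) (c : Sym2 V → ℕ) : Prop :=
  ∀ a b d : V, G.Adj a b → G.Adj a d → b ≠ d → c s(a, b) ≠ c s(a, d)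

/-- There is a rainbow copy of `H` in `G` under the edge colouring `c`:
a subgraph of `G` isomorphic to `H` whose edges have pairwise distinct colours. -/
def HasRainbowCopy {V W : Type*} (G : SimpleGraph V) (H : SimpleGraph W)
    (c : Sym2 V → ℕ) : Prop :=
  ∃ f : H →g G, Function.Injective f ∧
    ∀ e₁ ∈ H.edgeSet, ∀ e₂ ∈ H.edgeSet, e₁ ≠ e₂ →
      c (Sym2.map f e₁) ≠ c (Sym2.map f e₂)

/-- `G ⟶rb H`: every proper edge colouring of `G` yields a rainbow copy of `H`. -/
def RainbowArrow {V W : Type*} (G : SimpleGraph V) (H : SimpleGraph W) : Prop :=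
  ∀ c : Sym2 V → ℕ, IsProperEdgeColoring G c → HasRainbowCopy G H c

open SimpleGraph Finset
open Fin.NatCast Fin.CommRing

instance neZeroAux (m : ℕ) : NeZero (m + 2) := ⟨by omega⟩

lemma fin_cast_ne_zero {m : ℕ} (c : ℕ) (h1 : 0 < c) (h2 : c < m + 2) :
    (c : Fin (m + 2)) ≠ 0 := by
  intro h
  have h' := congrArg Fin.val h
  rw [Fin.val_natCast] at h'
  simp only [Fin.val_zero] at h'
  have := Nat.mod_eq_of_lt h2
  omega

lemma fin_ne_of {m : ℕ} (c : ℕ) (h1 : 0 < c) (h2 : c < m + 2) {x y : Fin (m + 2)}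
    (h : x - y = (c : Fin (m + 2))) : x ≠ y := fun he =>
  fin_cast_ne_zero c h1 h2 (by rw [← h, he, sub_self])



lemma cyc_adj_succ {m : ℕ} (j : Fin (m + 2)) : (cycleGraph (m + 2)).Adj j (j + 1) := by
  rw [SimpleGraph.cycleGraph_adj]; right; simp

lemma cyc_adj_pred {m : ℕ} (j : Fin (m + 2)) : (cycleGraph (m + 2)).Adj j (j - 1) := by
  rw [SimpleGraph.cycleGraph_adj]; left; simp


def Sparse {V : Type*} (ℓ : ℕ) (G : SimpleGraph V) : Prop :=
  ∀ J : G.Subgraph, J.verts.Nonempty →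
    (ℓ - 2) * J.edgeSet.ncard < (ℓ - 1) * J.verts.ncard

lemma sparse_anti {V : Type*} {G G' : SimpleGraph V} (h : G' ≤ G) {ℓ : ℕ}
    (hG : Sparse ℓ G) : Sparse ℓ G' := by
  intro J hJ
  exact hG ⟨J.verts, J.Adj, fun hj => h (J.adj_sub hj), J.edge_vert, J.symm⟩ hJ

lemma pair_ne {V : Type*} {p q r : V} (hpq : p ≠ q) (hqr : q ≠ r) :
    s(p, q) ≠ s(p, r) := by
  intro h
  rcases Sym2.eq_iff.mp h with ⟨-, h'⟩ | ⟨-, h'⟩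
  · exact hqr h'
  · exact hpq h'.symm

lemma nbr_two {V : Type*} [Fintype V] (G : SimpleGraph V) [DecidableRel G.Adj] {a b : V}
    (hab : G.Adj a b) (hdeg : G.degree a = 2) :
    ∃ u, G.Adj a u ∧ u ≠ b ∧ ∀ z, G.Adj a z → z = b ∨ z = u := by
  classical
  have hb : b ∈ G.neighborFinset a := by rw [mem_neighborFinset]; exact hab
  have hcard : (G.neighborFinset a).card = 2 := hdeg
  have hpos : 0 < ((G.neighborFinset a).erase b).card := by
    rw [Finset.card_erase_of_mem hb, hcard]; omega
  obtain ⟨u, hu⟩ := Finset.card_pos.mp hpos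
  have hub : u ≠ b := Finset.ne_of_mem_erase hu
  have hu' : u ∈ G.neighborFinset a := Finset.mem_of_mem_erase hu
  refine ⟨u, (mem_neighborFinset _ _ _).mp hu', hub, ?_⟩
  intro z hz
  have hsub : ({b, u} : Finset V) ⊆ G.neighborFinset a := by
    intro t ht; simp only [Finset.mem_insert, Finset.mem_singleton] at ht
    rcases ht with rfl | rfl
    exacts [hb, hu']
  have hcard2 : ({b, u} : Finset V).card = 2 := by
    rw [Finset.card_insert_of_notMem (by simp only [Finset.mem_singleton]; exact fun h => hub h.symm), Finset.card_singleton]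
  have heq : ({b, u} : Finset V) = G.neighborFinset a :=
    Finset.eq_of_subset_of_card_le hsub (by rw [hcard, hcard2])
  have hz' : z ∈ G.neighborFinset a := (mem_neighborFinset _ _ _).mpr hz
  rw [← heq] at hz'
  simpa using hz'

lemma nbr_one {V : Type*} [Fintype V] (G : SimpleGraph V) [DecidableRel G.Adj] {x : V}
    (hdeg : G.degree x = 1) : ∃ y, G.Adj x y ∧ ∀ z, G.Adj x z → z = y := by
  obtain ⟨y, hy⟩ := Finset.card_eq_one.mp (hdeg : (G.neighborFinset x).card = 1)
  refine ⟨y, ?_, fun z hz => ?_⟩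
  · have : y ∈ G.neighborFinset x := by rw [hy]; simp
    exact (mem_neighborFinset _ _ _).mp this
  · have : z ∈ G.neighborFinset x := (mem_neighborFinset _ _ _).mpr hz
    rw [hy] at this; simpa using this

set_option maxHeartbeats 1000000 in
lemma counting {V : Type*} [Fintype V] (m : ℕ) (hm : 5 ≤ m) (G : SimpleGraph V)
    [DecidableRel G.Adj]
    (hSp : Sparse (m + 2) G) (hedge : ∃ x y, G.Adj x y)
    (hd1 : ∀ v, G.degree v ≠ 1)
    (hd2 : ∀ a b, G.Adj a b → G.degree a = 2 → G.degree b = 2 → False) : False := by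
  classical
  obtain ⟨x₀, y₀, hxy⟩ := hedge
  set A := Finset.univ.filter (fun v => G.degree v = 2) with hA
  set B := Finset.univ.filter (fun v => 3 ≤ G.degree v) with hB
  set S := Finset.univ.filter (fun v => 0 < G.degree v) with hS
  have hSAB : S = A ∪ B := by
    ext v
    simp only [hA, hB, hS, Finset.mem_filter, Finset.mem_union, Finset.mem_univ, true_and]
    have := hd1 v; omega
  have hdisj : Disjoint A B := by
    rw [Finset.disjoint_left]
    intro v hv hv'
    simp only [hA, Finset.mem_filter] at hv
    simp only [hB, Finset.mem_filter] at hv'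
    omega
  have hScard : S.card = A.card + B.card := by rw [hSAB, Finset.card_union_of_disjoint hdisj]
  have hsumS : ∑ v ∈ S, G.degree v = 2 * G.edgeFinset.card := by
    rw [← sum_degrees_eq_twice_card_edges]
    apply Finset.sum_subset (Finset.subset_univ S)
    intro x _ hx
    simp only [hS, Finset.mem_filter, Finset.mem_univ, true_and] at hx
    omega
  have hsumA : ∑ v ∈ A, G.degree v = 2 * A.card := by
    rw [Finset.sum_congr rfl (fun v hv => by
      simp only [hA, Finset.mem_filter] at hv; exact hv.2)]
    simp [mul_comm]
  have hsumB : 3 * B.card ≤ ∑ v ∈ B, G.degree v := by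
    have := Finset.card_nsmul_le_sum B (fun v => G.degree v) 3 (fun v hv => by
      simp only [hB, Finset.mem_filter] at hv; exact hv.2)
    simpa [mul_comm] using this
  have hsplit : ∑ v ∈ S, G.degree v = ∑ v ∈ A, G.degree v + ∑ v ∈ B, G.degree v := by
    rw [hSAB, Finset.sum_union hdisj]
  have key1 : 2 * A.card + 3 * B.card ≤ 2 * G.edgeFinset.card := by omega
  -- key2 : 2 * A.card ≤ edges
  have hdegA : ∀ v ∈ A, G.degree v = 2 := fun v hv => by
    simp only [hA, Finset.mem_filter] at hv; exact hv.2
  have hpair : ∀ x ∈ A, ∀ y ∈ A, x ≠ y →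
      Disjoint (G.incidenceFinset x) (G.incidenceFinset y) := by
    intro x hx y hy hne
    rw [Finset.disjoint_left]
    intro e hex hey
    rw [mem_incidenceFinset] at hex hey
    have he : e = s(x, y) := (Sym2.mem_and_mem_iff hne).mp ⟨hex.2, hey.2⟩
    rw [he] at hex
    exact hd2 x y (G.mem_edgeSet.mp hex.1) (hdegA x hx) (hdegA y hy)
  have key2 : 2 * A.card ≤ G.edgeFinset.card := by
    have h1 : (A.biUnion (fun v => G.incidenceFinset v)).card
        = ∑ v ∈ A, (G.incidenceFinset v).card := Finset.card_biUnion hpair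
    have h2 : ∑ v ∈ A, (G.incidenceFinset v).card = 2 * A.card := by
      rw [Finset.sum_congr rfl (fun v hv => by
        rw [card_incidenceFinset_eq_degree, hdegA v hv])]
      simp [mul_comm]
    have h3 : A.biUnion (fun v => G.incidenceFinset v) ⊆ G.edgeFinset := by
      apply Finset.biUnion_subset.mpr
      intro v _
      intro e he
      rw [mem_incidenceFinset] at he
      exact mem_edgeFinset.mpr he.1
    calc 2 * A.card = (A.biUnion (fun v => G.incidenceFinset v)).card := by rw [h1, h2]
      _ ≤ G.edgeFinset.card := Finset.card_le_card h3
  -- the subgraph J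
  let J : G.Subgraph :=
    ⟨(S : Set V), G.Adj, fun hj => hj,
      fun {v w} hvw => by
        simp only [hS, Finset.coe_filter, Set.mem_setOf_eq, Finset.mem_univ, true_and]
        rw [degree_pos_iff_exists_adj]
        exact ⟨w, hvw⟩,
      G.symm⟩
  have hJv : J.verts.Nonempty := by
    refine ⟨x₀, ?_⟩
    simp only [J, hS, Finset.coe_filter, Set.mem_setOf_eq, Finset.mem_univ, true_and]
    rw [degree_pos_iff_exists_adj]
    exact ⟨y₀, hxy⟩
  have hJe : J.edgeSet = G.edgeSet := by
    ext e
    induction e using Sym2.ind with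
    | _ x y => exact Iff.rfl
  have hmain := hSp J hJv
  rw [hJe] at hmain
  have hvcard : J.verts.ncard = S.card := Set.ncard_coe_finset S
  have hecard : G.edgeSet.ncard = G.edgeFinset.card := by
    rw [← coe_edgeFinset, Set.ncard_coe_finset]
  rw [hvcard, hecard, hScard] at hmain
  have e2 : m + 2 - 2 = m := by omega
  have e1 : m + 2 - 1 = m + 1 := by omega
  rw [e2, e1] at hmain
  -- arithmetic contradiction
  have hX : (0:ℤ) ≤ (A.card : ℤ) := Int.natCast_nonneg _
  have hY : (0:ℤ) ≤ (B.card : ℤ) := Int.natCast_nonneg _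
  have hM5 : (5:ℤ) ≤ (m : ℤ) := by exact_mod_cast hm
  have s1 : (m:ℤ) * (G.edgeFinset.card : ℤ) < ((m:ℤ)+1) * ((A.card:ℤ) + (B.card:ℤ)) := by
    exact_mod_cast hmain
  have s2 : 2 * (A.card:ℤ) + 3 * (B.card:ℤ) ≤ 2 * (G.edgeFinset.card:ℤ) := by
    exact_mod_cast key1
  have s3 : 2 * (A.card:ℤ) ≤ (G.edgeFinset.card:ℤ) := by exact_mod_cast key2
  set X := (A.card:ℤ); set Y := (B.card:ℤ); set E := (G.edgeFinset.card:ℤ)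
  have c1 : ((m:ℤ)-1) * X < ((m:ℤ)+1) * Y := by nlinarith
  have c2 : ((m:ℤ)-2) * Y < 2 * X := by nlinarith
  have c3 : ((m:ℤ)-1) * (((m:ℤ)-2) * Y) < ((m:ℤ)-1) * (2 * X) :=
    mul_lt_mul_of_pos_left c2 (by linarith)
  have c5 : 0 ≤ ((m:ℤ) * (m:ℤ) - 5 * (m:ℤ)) * Y := mul_nonneg (by nlinarith) hY
  nlinarith [c1, c3, c5]

set_option maxHeartbeats 800000 in
lemma cycle_hits {V : Type*} {m : ℕ} (hm : 5 ≤ m) {G : SimpleGraph V}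
    (f : cycleGraph (m + 2) →g G) (inj : Function.Injective f) {a b u w : V}
    (hab : G.Adj a b) (hwa : w ≠ a)
    (hNa : ∀ z, G.Adj a z → z = b ∨ z = u)
    (hNb : ∀ z, G.Adj b z → z = a ∨ z = w)
    (i : Fin (m + 2)) (hfi : f i = a) :
    u ≠ w ∧ ∃ e₁ ∈ (cycleGraph (m + 2)).edgeSet, ∃ e₂ ∈ (cycleGraph (m + 2)).edgeSet,
      e₁ ≠ e₂ ∧ Sym2.map f e₁ = s(a, u) ∧ Sym2.map f e₂ = s(b, w) := by
  have hauw : s(a, u) ≠ s(b, w) := by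
    intro h
    rcases Sym2.eq_iff.mp h with ⟨h', -⟩ | ⟨h', -⟩
    · exact hab.ne h'
    · exact hwa h'.symm
  have hp : G.Adj a (f (i + 1)) := hfi ▸ f.map_adj (cyc_adj_succ i)
  have hq : G.Adj a (f (i - 1)) := hfi ▸ f.map_adj (cyc_adj_pred i)
  have hd : f (i + 1) ≠ f (i - 1) := fun h =>
    fin_ne_of 2 (by omega) (by omega) (by push_cast; ring) (inj h)
  rcases hNa _ hp with h1 | h1 <;> rcases hNa _ hq with h2 | h2
  · exact absurd (h1.trans h2.symm) hd
  · -- f (i+1) = b, f (i-1) = u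
    have hb2 : G.Adj b (f (i + 1 + 1)) := h1 ▸ f.map_adj (cyc_adj_succ (i + 1))
    have hfo : f (i + 1 + 1) = w := by
      rcases hNb _ hb2 with h | h
      · exact absurd (inj (h.trans hfi.symm))
          (fin_ne_of 2 (by omega) (by omega) (by push_cast; ring))
      · exact h
    have huw : u ≠ w := fun he =>
      (fin_ne_of 3 (by omega) (by omega) (by push_cast; ring)).symm
        (inj (h2.trans (he.trans hfo.symm)))
    refine ⟨huw, s(i, i - 1), (SimpleGraph.mem_edgeSet _).mpr (cyc_adj_pred i),
      s(i + 1, i + 1 + 1), (SimpleGraph.mem_edgeSet _).mpr (cyc_adj_succ (i + 1)), ?_, ?_, ?_⟩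
    · intro h
      apply hauw
      have h' := congrArg (Sym2.map f) h
      rw [Sym2.map_pair_eq, Sym2.map_pair_eq, hfi, h2, h1, hfo] at h'
      exact h'
    · rw [Sym2.map_pair_eq, hfi, h2]
    · rw [Sym2.map_pair_eq, h1, hfo]
  · -- f (i+1) = u, f (i-1) = b
    have hb2 : G.Adj b (f (i - 1 - 1)) := h2 ▸ f.map_adj (cyc_adj_pred (i - 1))
    have hfo : f (i - 1 - 1) = w := by
      rcases hNb _ hb2 with h | h
      · exact absurd (inj (h.trans hfi.symm))
          ((fin_ne_of 2 (by omega) (by omega) (by push_cast; ring)).symm)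
      · exact h
    have huw : u ≠ w := fun he =>
      fin_ne_of 3 (by omega) (by omega) (by push_cast; ring)
        (inj (h1.trans (he.trans hfo.symm)))
    refine ⟨huw, s(i, i + 1), (SimpleGraph.mem_edgeSet _).mpr (cyc_adj_succ i),
      s(i - 1, i - 1 - 1), (SimpleGraph.mem_edgeSet _).mpr (cyc_adj_pred (i - 1)), ?_, ?_, ?_⟩
    · intro h
      apply hauw
      have h' := congrArg (Sym2.map f) h
      rw [Sym2.map_pair_eq, Sym2.map_pair_eq, hfi, h1, h2, hfo] at h'
      exact h'
    · rw [Sym2.map_pair_eq, hfi, h1]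
    · rw [Sym2.map_pair_eq, h2, hfo]
  · exact absurd (h1.trans h2.symm) hd

lemma no_edges_case {V : Type*} (m : ℕ) (G : SimpleGraph V) (hE : G.edgeSet = ∅) :
    ∃ c : Sym2 V → ℕ, IsProperEdgeColoring G c ∧
      ¬ HasRainbowCopy G (cycleGraph (m + 2)) c := by
  refine ⟨fun _ => 0, ?_, ?_⟩
  · intro p q r hpq _ _
    exact absurd ((SimpleGraph.mem_edgeSet _).mpr hpq) (by simp [hE])
  · rintro ⟨f, -, -⟩
    have hadj : G.Adj (f 0) (f (0 + 1)) := f.map_adj (cyc_adj_succ 0)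
    exact absurd ((SimpleGraph.mem_edgeSet _).mpr hadj) (by simp [hE])

set_option maxHeartbeats 3000000 in
theorem aux_main {V : Type*} [Fintype V] (m : ℕ) (hm : 5 ≤ m) :
    ∀ (n : ℕ) (G : SimpleGraph V), G.edgeSet.ncard ≤ n → Sparse (m + 2) G →
      ∃ c : Sym2 V → ℕ, IsProperEdgeColoring G c ∧
        ¬ HasRainbowCopy G (cycleGraph (m + 2)) c := by
  intro n
  induction n with
  | zero =>
    intro G hcard _
    exact no_edges_case m G ((Set.ncard_eq_zero (Set.toFinite _)).mp (Nat.le_zero.mp hcard))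
  | succ n IH =>
    intro G hcard hSp
    classical
    by_cases hE : G.edgeSet = ∅
    · exact no_edges_case m G hE
    obtain ⟨x₀, y₀, hxy₀⟩ : ∃ x y, G.Adj x y := by
      obtain ⟨e, he⟩ := Set.nonempty_iff_ne_empty.mpr hE
      induction e using Sym2.ind with
      | _ x y => exact ⟨x, y, (SimpleGraph.mem_edgeSet _).mp he⟩
    haveI : DecidableRel G.Adj := fun _ _ => Classical.dec _
    by_cases h1 : ∃ x y, G.Adj x y ∧ ∀ z, G.Adj x z → z = y
    · -- pendant-edge case
      obtain ⟨x, y, hxy, hNx⟩ := h1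
      set G' := G.deleteEdges {s(x, y)} with hG'
      have hle : G' ≤ G := G.deleteEdges_le _
      have hxyE : s(x, y) ∈ G.edgeSet := (SimpleGraph.mem_edgeSet _).mpr hxy
      have hss : G'.edgeSet ⊂ G.edgeSet := by
        rw [hG', edgeSet_deleteEdges]
        refine ⟨Set.diff_subset, fun hsub => ?_⟩
        have := hsub hxyE
        simp at this
      have hlt : G'.edgeSet.ncard ≤ n := by
        have := Set.ncard_lt_ncard hss (Set.toFinite G.edgeSet)
        omega
      obtain ⟨c', hp', hnr'⟩ := IH G' hlt (sparse_anti hle hSp)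
      set M := (Finset.univ.sup c') + 1 with hM0
      have hM : ∀ e : Sym2 V, c' e < M := fun e =>
        Nat.lt_succ_of_le (Finset.le_sup (Finset.mem_univ e))
      refine ⟨fun e => if e = s(x, y) then M else c' e, ?_, ?_⟩
      · intro p q r hpq hpr hqr
        have hne : s(p, q) ≠ s(p, r) := pair_ne hpq.ne hqr
        by_cases hq : s(p, q) = s(x, y) <;> by_cases hr : s(p, r) = s(x, y)
        · exact absurd (hq.trans hr.symm) hne
        · simp only [if_pos hq, if_neg hr]
          exact (hM _).ne'
        · simp only [if_neg hq, if_pos hr]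
          exact (hM _).ne
        · simp only [if_neg hq, if_neg hr]
          exact hp' p q r (SimpleGraph.deleteEdges_adj.mpr ⟨hpq, by simp [hq]⟩)
            (SimpleGraph.deleteEdges_adj.mpr ⟨hpr, by simp [hr]⟩) hqr
      · rintro ⟨f, finj, frb⟩
        by_cases hall : ∀ e ∈ (cycleGraph (m + 2)).edgeSet, Sym2.map f e ≠ s(x, y)
        · apply hnr'
          refine ⟨⟨f, ?_⟩, finj, ?_⟩
          · intro p q hpq2
            refine SimpleGraph.deleteEdges_adj.mpr ⟨f.map_adj hpq2, ?_⟩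
            have := hall s(p, q) ((SimpleGraph.mem_edgeSet _).mpr hpq2)
            rw [Sym2.map_pair_eq] at this
            simpa using this
          · intro e₁ he₁ e₂ he₂ hne12
            have r1 := hall e₁ he₁
            have r2 := hall e₂ he₂
            have hfr := frb e₁ he₁ e₂ he₂ hne12
            simp only [if_neg r1, if_neg r2] at hfr
            exact hfr
        · push_neg at hall
          obtain ⟨e, he, heq⟩ := hall
          have hex : ∃ i : Fin (m + 2), f i = x := by
            induction e using Sym2.ind with
            | _ p q =>
              rw [Sym2.map_pair_eq] at heq
              rcases Sym2.eq_iff.mp heq with ⟨h', -⟩ | ⟨-, h'⟩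
              · exact ⟨p, h'⟩
              · exact ⟨q, h'⟩
          obtain ⟨i, hfi⟩ := hex
          have ha1 : G.Adj x (f (i + 1)) := hfi ▸ f.map_adj (cyc_adj_succ i)
          have ha2 : G.Adj x (f (i - 1)) := hfi ▸ f.map_adj (cyc_adj_pred i)
          exact fin_ne_of 2 (by omega) (by omega) (by push_cast; ring)
            (finj ((hNx _ ha1).trans (hNx _ ha2).symm))
    by_cases h2 : ∃ a b u w, G.Adj a b ∧ G.Adj a u ∧ G.Adj b w ∧ u ≠ b ∧ w ≠ a ∧
        (∀ z, G.Adj a z → z = b ∨ z = u) ∧ (∀ z, G.Adj b z → z = a ∨ z = w)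
    · obtain ⟨a, b, u, w, hab, hau, hbw, hub, hwa, hNa, hNb⟩ := h2
      set G' := G.deleteEdges {s(a, u), s(b, w), s(a, b)} with hG'
      have hle : G' ≤ G := G.deleteEdges_le _
      have habE : s(a, b) ∈ G.edgeSet := (SimpleGraph.mem_edgeSet _).mpr hab
      have hss : G'.edgeSet ⊂ G.edgeSet := by
        rw [hG', edgeSet_deleteEdges]
        refine ⟨Set.diff_subset, fun hsub => ?_⟩
        have := hsub habE
        simp at this
      have hlt : G'.edgeSet.ncard ≤ n := by
        have := Set.ncard_lt_ncard hss (Set.toFinite G.edgeSet)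
        omega
      obtain ⟨c', hp', hnr'⟩ := IH G' hlt (sparse_anti hle hSp)
      set M := (Finset.univ.sup c') + 1 with hM0
      have hM : ∀ e : Sym2 V, c' e < M := fun e =>
        Nat.lt_succ_of_le (Finset.le_sup (Finset.mem_univ e))
      have hE12 : s(a, u) ≠ s(b, w) := by
        intro h
        rcases Sym2.eq_iff.mp h with ⟨h', -⟩ | ⟨h', -⟩
        · exact hab.ne h'
        · exact hwa h'.symm
      have hE13 : s(a, u) ≠ s(a, b) := by
        intro h
        rcases Sym2.eq_iff.mp h with ⟨-, h'⟩ | ⟨h', -⟩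
        · exact hub h'
        · exact hab.ne h'
      have hE23 : s(b, w) ≠ s(a, b) := by
        intro h
        rcases Sym2.eq_iff.mp h with ⟨h', -⟩ | ⟨-, h'⟩
        · exact hab.ne h'.symm
        · exact hwa h'
      set c : Sym2 V → ℕ := fun e =>
        if e = s(a, u) then M
        else if e = s(b, w) then (if u = w then M + 1 else M)
        else if e = s(a, b) then M + 2
        else c' e with hc
      have hc1 : c s(a, u) = M := if_pos rfl
      have hc2 : c s(b, w) = if u = w then M + 1 else M :=
        (if_neg (Ne.symm hE12)).trans (if_pos rfl)
      have hc3 : c s(a, b) = M + 2 :=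
        (if_neg (Ne.symm hE13)).trans ((if_neg (Ne.symm hE23)).trans (if_pos rfl))
      have hco : ∀ e, e ≠ s(a, u) → e ≠ s(b, w) → e ≠ s(a, b) → c e = c' e :=
        fun e n1 n2 n3 => (if_neg n1).trans ((if_neg n2).trans (if_neg n3))
      refine ⟨c, ?_, ?_⟩
      · intro p q r hpq hpr hqr
        have hne : s(p, q) ≠ s(p, r) := pair_ne hpq.ne hqr
        by_cases q1 : s(p, q) = s(a, u)
        · by_cases r2 : s(p, r) = s(b, w)
          · rw [q1, r2, hc1, hc2]
            split_ifs with huw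
            · omega
            · exfalso
              rcases Sym2.eq_iff.mp q1 with ⟨hp1, -⟩ | ⟨hp1, -⟩ <;>
                rcases Sym2.eq_iff.mp r2 with ⟨hp2, -⟩ | ⟨hp2, -⟩
              · exact hab.ne (hp1.symm.trans hp2)
              · exact hwa (hp1.symm.trans hp2).symm
              · exact hub (hp1.symm.trans hp2)
              · exact huw (hp1.symm.trans hp2)
          · by_cases r3 : s(p, r) = s(a, b)
            · rw [q1, r3, hc1, hc3]; omega
            · by_cases r1 : s(p, r) = s(a, u)
              · exact absurd (q1.trans r1.symm) hne
              · rw [q1, hc1, hco _ r1 r2 r3]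
                exact (hM _).ne'
        · by_cases q2 : s(p, q) = s(b, w)
          · by_cases r1 : s(p, r) = s(a, u)
            · rw [q2, r1, hc2, hc1]
              split_ifs with huw
              · omega
              · exfalso
                rcases Sym2.eq_iff.mp q2 with ⟨hp1, -⟩ | ⟨hp1, -⟩ <;>
                  rcases Sym2.eq_iff.mp r1 with ⟨hp2, -⟩ | ⟨hp2, -⟩
                · exact hab.ne (hp2.symm.trans hp1)
                · exact hub (hp2.symm.trans hp1)
                · exact hwa (hp1.symm.trans hp2)
                · exact huw (hp2.symm.trans hp1)
            · by_cases r3 : s(p, r) = s(a, b)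
              · rw [q2, r3, hc2, hc3]; split_ifs <;> omega
              · by_cases r2 : s(p, r) = s(b, w)
                · exact absurd (q2.trans r2.symm) hne
                · rw [q2, hc2, hco _ r1 r2 r3]
                  have := hM s(p, r)
                  split_ifs <;> omega
          · by_cases q3 : s(p, q) = s(a, b)
            · by_cases r1 : s(p, r) = s(a, u)
              · rw [q3, r1, hc3, hc1]; omega
              · by_cases r2 : s(p, r) = s(b, w)
                · rw [q3, r2, hc3, hc2]; split_ifs <;> omega
                · by_cases r3 : s(p, r) = s(a, b)
                  · exact absurd (q3.trans r3.symm) hne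
                  · rw [q3, hc3, hco _ r1 r2 r3]
                    have := hM s(p, r)
                    omega
            · by_cases r1 : s(p, r) = s(a, u)
              · rw [hco _ q1 q2 q3, r1, hc1]
                exact (hM _).ne
              · by_cases r2 : s(p, r) = s(b, w)
                · rw [hco _ q1 q2 q3, r2, hc2]
                  have := hM s(p, q)
                  split_ifs <;> omega
                · by_cases r3 : s(p, r) = s(a, b)
                  · rw [hco _ q1 q2 q3, r3, hc3]
                    have := hM s(p, q)
                    omega
                  · rw [hco _ q1 q2 q3, hco _ r1 r2 r3]
                    refine hp' p q r ?_ ?_ hqr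
                    · exact SimpleGraph.deleteEdges_adj.mpr ⟨hpq, by simp [q1, q2, q3]⟩
                    · exact SimpleGraph.deleteEdges_adj.mpr ⟨hpr, by simp [r1, r2, r3]⟩
      · rintro ⟨f, finj, frb⟩
        by_cases hall : ∀ e ∈ (cycleGraph (m + 2)).edgeSet,
            Sym2.map f e ∉ ({s(a, u), s(b, w), s(a, b)} : Set (Sym2 V))
        · apply hnr'
          refine ⟨⟨f, ?_⟩, finj, ?_⟩
          · intro p q hpq2
            have h3 := hall s(p, q) ((SimpleGraph.mem_edgeSet _).mpr hpq2)
            rw [Sym2.map_pair_eq] at h3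
            exact SimpleGraph.deleteEdges_adj.mpr ⟨f.map_adj hpq2, h3⟩
          · intro e₁ he₁ e₂ he₂ hne12
            have r1 := hall e₁ he₁
            have r2 := hall e₂ he₂
            simp only [Set.mem_insert_iff, Set.mem_singleton_iff, not_or] at r1 r2
            have hfr := frb e₁ he₁ e₂ he₂ hne12
            rw [hco _ r1.1 r1.2.1 r1.2.2, hco _ r2.1 r2.2.1 r2.2.2] at hfr
            exact hfr
        · push_neg at hall
          obtain ⟨e, he, hmem⟩ := hall
          have hx : (∃ i, f i = a) ∨ (∃ i, f i = b) := by
            induction e using Sym2.ind with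
            | _ p q =>
              rw [Sym2.map_pair_eq] at hmem
              simp only [Set.mem_insert_iff, Set.mem_singleton_iff] at hmem
              rcases hmem with h | h | h
              · rcases Sym2.eq_iff.mp h with ⟨h', -⟩ | ⟨-, h'⟩
                · exact Or.inl ⟨p, h'⟩
                · exact Or.inl ⟨q, h'⟩
              · rcases Sym2.eq_iff.mp h with ⟨h', -⟩ | ⟨-, h'⟩
                · exact Or.inr ⟨p, h'⟩
                · exact Or.inr ⟨q, h'⟩
              · rcases Sym2.eq_iff.mp h with ⟨h', -⟩ | ⟨-, h'⟩
                · exact Or.inl ⟨p, h'⟩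
                · exact Or.inl ⟨q, h'⟩
          rcases hx with ⟨i, hfi⟩ | ⟨i, hfi⟩
          · obtain ⟨huw, e₁, he₁, e₂, he₂, hne12, hm1, hm2⟩ :=
              cycle_hits hm f finj hab hwa hNa hNb i hfi
            apply frb e₁ he₁ e₂ he₂ hne12
            rw [hm1, hm2, hc1, hc2, if_neg huw]
          · obtain ⟨hwu, e₁, he₁, e₂, he₂, hne12, hm1, hm2⟩ :=
              cycle_hits hm f finj hab.symm hub hNb hNa i hfi
            apply frb e₁ he₁ e₂ he₂ hne12
            rw [hm1, hm2, hc1, hc2, if_neg (fun h => hwu h.symm)]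
    · exfalso
      refine counting m hm G hSp ⟨x₀, y₀, hxy₀⟩ ?_ ?_
      · intro v hv
        obtain ⟨y, hy, hally⟩ := nbr_one G hv
        exact h1 ⟨v, y, hy, hally⟩
      · intro a b hab ha hb
        obtain ⟨u, hau, hub, hNa⟩ := nbr_two G hab ha
        obtain ⟨w, hbw, hwa, hNb⟩ := nbr_two G hab.symm hb
        exact h2 ⟨a, b, u, w, hab, hau, hbw, hub, hwa, hNa, hNb⟩


/-- If every subgraph `J` of `G` with at least one vertex satisfies
`(ℓ-2)·e(J) < (ℓ-1)·v(J)` (i.e. `m(G) < (ℓ-1)/(ℓ-2)`), then there is a proper edge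
colouring of `G` in which no copy of `C_ℓ` is rainbow, i.e. `G ⟶̸rb C_ℓ`. -/
theorem no_rainbow_cycle_of_sparse_seven {V : Type*} [Fintype V] (ℓ : ℕ) (hℓ : 7 ≤ ℓ)
    (G : SimpleGraph V)
    (hG : ∀ J : G.Subgraph, J.verts.Nonempty →
      (ℓ - 2) * J.edgeSet.ncard < (ℓ - 1) * J.verts.ncard) :
    ∃ c : Sym2 V → ℕ, IsProperEdgeColoring G c ∧
      ¬ HasRainbowCopy G (SimpleGraph.cycleGraph ℓ) c := by
  obtain ⟨k, rfl⟩ : ∃ k, ℓ = k + 7 := ⟨ℓ - 7, by omega⟩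
  exact aux_main (k + 5) (by omega) G.edgeSet.ncard G le_rfl hG
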